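/- For every integer b ≥ 2, γ(1/b) = b · log( b / ((b-1) σ_b) ), where γ is the generalized Euler-constant function and σ_b the generalized Somos constant. -/

import Mathlib

noncomputable def somosB (b : ℕ) : ℝ :=
  ∏' i : ℕ, ((i : ℝ) + 1) ^ (((b : ℝ) - 1) / (b : ℝ) ^ (i + 1))

noncomputable def eulerGamma (z : ℝ) : ℝ :=
  ∑' i : ℕ, z ^ i * (((i : ℝ) + 1)⁻¹ - Real.log (((i : ℝ) + 2) / ((i : ℝ) + 1)))

/-- For every integer `b ≥ 2`, `γ(1/b) = b log(b/((b-1)σ_b))`. -/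
theorem eulerGamma_eq (b : ℕ) (hb : 2 ≤ b) :
    eulerGamma ((b : ℝ))⁻¹ = (b : ℝ) * Real.log ((b : ℝ) / (((b : ℝ) - 1) * somosB b)) := by
  set B : ℝ := (b : ℝ) with hBdef
  have hB2 : (2 : ℝ) ≤ B := by rw [hBdef]; exact_mod_cast hb
  have hB1 : (1 : ℝ) < B := lt_of_lt_of_le one_lt_two hB2
  have hB0 : (0 : ℝ) < B := lt_trans one_pos hB1
  set x : ℝ := B⁻¹ with hxdef
  have hx0 : 0 < x := inv_pos.2 hB0
  have hx1 : x < 1 := by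
    rw [hxdef, inv_lt_one_iff₀]; right; exact hB1
  have habs : |x| < 1 := by rwa [abs_of_pos hx0]
  set g : ℕ → ℝ := fun i => x ^ i * Real.log ((i : ℝ) + 1) with hgdef
  -- summability of g
  have hg : Summable g := by
    have hmaj : Summable (fun n : ℕ => (n : ℝ) ^ 1 * x ^ n) :=
      summable_pow_mul_geometric_of_norm_lt_one 1 (by rwa [Real.norm_eq_abs])
    refine Summable.of_nonneg_of_le (fun i => ?_) (fun i => ?_) hmaj
    · have : (0 : ℝ) ≤ Real.log ((i : ℝ) + 1) :=
        Real.log_nonneg (by simp)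
      positivity
    · have hlog : Real.log ((i : ℝ) + 1) ≤ (i : ℝ) := by
        have := Real.log_le_sub_one_of_pos (x := (i : ℝ) + 1) (by positivity)
        linarith
      calc x ^ i * Real.log ((i : ℝ) + 1) ≤ x ^ i * (i : ℝ) := by
            exact mul_le_mul_of_nonneg_left hlog (by positivity)
        _ = (i : ℝ) ^ 1 * x ^ i := by ring
  set L : ℝ := ∑' i, g i with hLdef
  have hL : HasSum g L := hg.hasSum
  have hg1 : HasSum (fun n => g (n + 1)) L := by
    rw [hasSum_nat_add_iff 1]
    simpa [hgdef] using hL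
  have hBx : B * x = 1 := mul_inv_cancel₀ (ne_of_gt hB0)
  -- the log-part sum
  have h2 : HasSum (fun i : ℕ => x ^ i * Real.log (((i : ℝ) + 2) / ((i : ℝ) + 1)))
      ((B - 1) * L) := by
    have h := (hg1.mul_left B).sub hL
    have heq : (fun i : ℕ => B * g (i + 1) - g i)
        = fun i : ℕ => x ^ i * Real.log (((i : ℝ) + 2) / ((i : ℝ) + 1)) := by
      funext i
      have h1' : ((i : ℝ) + 1) ≠ 0 := by positivity
      have h2' : ((i : ℝ) + 2) ≠ 0 := by positivity
      rw [Real.log_div h2' h1']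
      simp only [hgdef]
      push_cast
      have hx' : B * x ^ (i + 1) = x ^ i := by
        rw [pow_succ']
        rw [← mul_assoc, hBx, one_mul]
      rw [show ((i : ℝ) + 1 + 1) = (i : ℝ) + 2 by ring]
      linear_combination Real.log ((i : ℝ) + 2) * hx'
    rw [heq] at h
    rw [show (B - 1) * L = B * L - L by ring]
    exact h
  -- the harmonic-part sum
  have h1 : HasSum (fun i : ℕ => x ^ i * ((i : ℝ) + 1)⁻¹) (B * Real.log (B / (B - 1))) := by
    have h := (Real.hasSum_pow_div_log_of_abs_lt_one habs).mul_left B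
    have heq : (fun n : ℕ => B * (x ^ (n + 1) / ((n : ℝ) + 1)))
        = fun n : ℕ => x ^ n * ((n : ℝ) + 1)⁻¹ := by
      funext n
      rw [pow_succ, div_eq_mul_inv]
      calc B * (x ^ n * x * ((n : ℝ) + 1)⁻¹) = (B * x) * (x ^ n * ((n : ℝ) + 1)⁻¹) := by ring
        _ = x ^ n * ((n : ℝ) + 1)⁻¹ := by rw [hBx, one_mul]
    rw [heq] at h
    rw [show B * Real.log (B / (B - 1)) = B * -Real.log (1 - x) by
      have hB1' : B - 1 ≠ 0 := by linarith
      have : (1 : ℝ) - x = (B - 1) / B := by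
        rw [hxdef]
        field_simp
      rw [this, Real.log_div hB1' (ne_of_gt hB0), Real.log_div (ne_of_gt hB0) hB1']
      ring]
    exact h
  -- eulerGamma value
  have hEG : eulerGamma x = B * Real.log (B / (B - 1)) - (B - 1) * L := by
    have h := h1.sub h2
    rw [eulerGamma]
    rw [show (fun i : ℕ => x ^ i * (((i : ℝ) + 1)⁻¹ - Real.log (((i : ℝ) + 2) / ((i : ℝ) + 1))))
        = fun i : ℕ => x ^ i * ((i : ℝ) + 1)⁻¹
          - x ^ i * Real.log (((i : ℝ) + 2) / ((i : ℝ) + 1)) from funext fun i => by ring]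
    exact h.tsum_eq
  -- somos value
  have hσ : somosB b = Real.exp (((B - 1) / B) * L) := by
    have hc : HasSum (fun i : ℕ => ((B - 1) / B) * g i) (((B - 1) / B) * L) := hL.mul_left _
    have hp := hc.rexp
    have heq : (Real.exp ∘ fun i : ℕ => ((B - 1) / B) * g i)
        = fun i : ℕ => ((i : ℝ) + 1) ^ ((B - 1) / B ^ (i + 1)) := by
      funext i
      have hpos : (0 : ℝ) < (i : ℝ) + 1 := by positivity
      rw [Function.comp_apply, Real.rpow_def_of_pos hpos]
      congr 1
      simp only [hgdef]
      rw [hxdef, inv_pow]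
      rw [pow_succ]
      field_simp
    rw [heq] at hp
    unfold somosB
    rw [← hBdef]
    exact hp.tprod_eq
  have hσpos : 0 < somosB b := by rw [hσ]; exact Real.exp_pos _
  have hB1' : B - 1 ≠ 0 := by linarith
  rw [hEG, hσ, Real.log_div (ne_of_gt hB0) (mul_ne_zero hB1' (Real.exp_ne_zero _)),
    Real.log_mul hB1' (Real.exp_ne_zero _), Real.log_exp, Real.log_div (ne_of_gt hB0) hB1']
  field_simp
  ring
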